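/- Let X be a topological space and Y a metrizable space. Every pointwise limit of a sequence of continuous mappings f : X → Y admits a base consisting of functionally closed (zero) sets which is a countable union of strongly functionally discrete families. -/

import Mathlib

def DiscreteSetFamily {X : Type*} [TopologicalSpace X] (𝓑 : Set (Set X)) : Prop :=
  ∀ x : X, ∃ U : Set X, IsOpen U ∧ x ∈ U ∧
    ∀ A ∈ 𝓑, ∀ B ∈ 𝓑, (U ∩ A).Nonempty → (U ∩ B).Nonempty → A = B

/-- A set is functionally closed (a zero set) if it is `g ⁻¹' {0}` for some continuous
`g : X → [0,1]`. -/
def FunctionallyClosed {X : Type*} [TopologicalSpace X] (F : Set X) : Prop :=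
  ∃ g : X → ℝ, Continuous g ∧ (∀ x, g x ∈ Set.Icc (0:ℝ) 1) ∧ F = g ⁻¹' {0}

/-- A set is functionally open (cozero) if its complement is functionally closed. -/
def FunctionallyOpen {X : Type*} [TopologicalSpace X] (U : Set X) : Prop :=
  FunctionallyClosed Uᶜ

/-- A set-family is strongly functionally discrete if each member's closure can be enclosed in
a member of a discrete family of functionally open sets. -/
def SFDSetFamily {X : Type*} [TopologicalSpace X] (𝓐 : Set (Set X)) : Prop :=
  ∃ U : Set X → Set X, (∀ A ∈ 𝓐, FunctionallyOpen (U A) ∧ closure A ⊆ U A) ∧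
    ∀ x : X, ∃ V : Set X, IsOpen V ∧ x ∈ V ∧
      ∀ A ∈ 𝓐, ∀ B ∈ 𝓐, (V ∩ U A).Nonempty → (V ∩ U B).Nonempty → A = B

def IsBaseForMapping {X Y : Type*} [TopologicalSpace X] [TopologicalSpace Y]
    (f : X → Y) (𝓑 : Set (Set X)) : Prop :=
  ∀ V : Set Y, IsOpen V → ∃ 𝓢 ⊆ 𝓑, f ⁻¹' V = ⋃₀ 𝓢

section Auxiliary

open Metric Set

/-- Every open cover of a metric space admits an open refinement which is a countable union
of uniformly separated (hence discrete) families.  This is the core of Stone's theorem. -/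
lemma sigma_discrete_refinement {Y : Type*} [MetricSpace Y] {ι : Type*} (s : ι → Set Y)
    (ho : ∀ i, IsOpen (s i)) (hcov : ∀ x, ∃ i, x ∈ s i) :
    ∃ D : ℕ → ι → Set Y, (∀ n i, IsOpen (D n i)) ∧ (∀ n i, D n i ⊆ s i) ∧
      (∀ x, ∃ n i, x ∈ D n i) ∧
      (∀ n, ∀ i j, i ≠ j → ∀ x ∈ D n i, ∀ y ∈ D n j, (2⁻¹ : ℝ) ^ n < dist x y) := by
  have pow_pos : ∀ k : ℕ, (0 : ℝ) < 2⁻¹ ^ k := fun k => by positivity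
  obtain ⟨_, wf⟩ := exists_wellOrder ι
  set ind : Y → ι := fun x => wellFounded_lt.min { i : ι | x ∈ s i } (hcov x)
  have mem_ind : ∀ x, x ∈ s (ind x) := fun x => wellFounded_lt.min_mem _ (hcov x)
  have nmem_of_lt_ind : ∀ {x i}, i < ind x → x ∉ s i := @fun x i hlt hxi =>
    wellFounded_lt.not_lt_min { i : ι | x ∈ s i } (x := i) hxi hlt
  set D : ℕ → ι → Set Y := fun n =>
    Nat.strongRecOn (motive := fun _ => ι → Set Y) n fun n D' i =>
      ⋃ (x : Y) (_ : ind x = i) (_ : ball x (3 * 2⁻¹ ^ n) ⊆ s i) (_ :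
        ∀ (m : ℕ) (H : m < n), ∀ (j : ι), x ∉ D' m H j), ball x (2⁻¹ ^ n) with hD
  have Dn : ∀ n i, D n i = ⋃ (x : Y) (_ : ind x = i) (_ : ball x (3 * 2⁻¹ ^ n) ⊆ s i)
      (_ : ∀ m < n, ∀ (j : ι), x ∉ D m j), ball x (2⁻¹ ^ n) := fun n s => by
    simp only [hD]
    rw [Nat.strongRecOn_eq]
  have memD : ∀ {n i y},
      y ∈ D n i ↔ ∃ x : Y, ind x = i ∧ ball x (3 * 2⁻¹ ^ n) ⊆ s i ∧
        (∀ m < n, ∀ (j : ι), x ∉ D m j) ∧ dist y x < 2⁻¹ ^ n := by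
    intro n i y
    rw [Dn n i]
    simp only [mem_iUnion, mem_ball, exists_prop]
  have Dcov : ∀ x, ∃ n i, x ∈ D n i := fun x => by
    obtain ⟨n, hn⟩ : ∃ n : ℕ, ball x (3 * 2⁻¹ ^ n) ⊆ s (ind x) := by
      rcases isOpen_iff.1 (ho <| ind x) x (mem_ind x) with ⟨ε, ε0, hε⟩
      obtain ⟨n, hn⟩ : ∃ n : ℕ, (2⁻¹ : ℝ) ^ n < ε / 3 :=
        exists_pow_lt_of_lt_one (by positivity) (by norm_num)
      refine ⟨n, Subset.trans (ball_subset_ball ?_) hε⟩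
      nlinarith
    by_contra! h
    apply h n (ind x)
    exact memD.2 ⟨x, rfl, hn, fun _ _ _ => h _ _, mem_ball_self (pow_pos _)⟩
  have Dopen : ∀ n i, IsOpen (D n i) := fun n i => by
    rw [Dn]
    iterate 4 refine isOpen_iUnion fun _ => ?_
    exact isOpen_ball
  have HDS : ∀ n i, D n i ⊆ s i := fun n i x => by
    rw [memD]
    rintro ⟨y, rfl, hsub, -, hyx⟩
    refine hsub ?_
    rw [mem_ball]
    nlinarith [pow_pos n]
  refine ⟨D, Dopen, HDS, Dcov, ?_⟩
  intro n i j hij x hx y hy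
  wlog h : i < j generalizing i j x y
  · rw [dist_comm]
    exact this j i hij.symm y hy x hx (hij.lt_or_gt.resolve_left h)
  rcases memD.1 hx with ⟨p, rfl, hsubp, -, hdistp⟩
  rcases memD.1 hy with ⟨q, hqj, -, -, hdistq⟩
  have hq : q ∉ s (ind p) := nmem_of_lt_ind (hqj ▸ h)
  have h3 : ¬ dist q p < 3 * 2⁻¹ ^ n := fun hlt => hq (hsubp hlt)
  push_neg at h3
  have h1 : dist p q ≤ dist p x + dist x y + dist y q := dist_triangle4 p x y q
  rw [dist_comm q p] at h3
  rw [dist_comm p x] at h1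
  nlinarith

/-- Every metric space has a σ-discrete base of open sets. -/
lemma exists_sigma_discrete_base (Y : Type*) [MetricSpace Y] :
    ∃ B : ℕ → ℕ → Set (Set Y),
      (∀ n m, DiscreteSetFamily (B n m)) ∧ (∀ n m, ∀ W ∈ B n m, IsOpen W) ∧
      ∀ V : Set Y, IsOpen V → ∃ S ⊆ ⋃ (n) (m), B n m, V = ⋃₀ S := by
  have key : ∀ n : ℕ, ∃ D : ℕ → Y → Set Y, (∀ m i, IsOpen (D m i)) ∧
      (∀ m i, D m i ⊆ ball i ((2⁻¹ : ℝ) ^ n)) ∧ (∀ x, ∃ m i, x ∈ D m i) ∧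
      (∀ m, ∀ i j, i ≠ j → ∀ x ∈ D m i, ∀ y ∈ D m j, (2⁻¹ : ℝ) ^ m < dist x y) :=
    fun n => sigma_discrete_refinement (fun i => ball i ((2⁻¹ : ℝ) ^ n))
      (fun _ => isOpen_ball) (fun x => ⟨x, mem_ball_self (by positivity)⟩)
  choose D hOpen hSub hCov hSep using key
  refine ⟨fun n m => {W | ∃ i, W = D n m i}, ?_, ?_, ?_⟩
  · rintro n m z
    refine ⟨ball z ((2⁻¹ : ℝ) ^ m / 2), isOpen_ball, mem_ball_self (by positivity), ?_⟩
    rintro A ⟨i, rfl⟩ B ⟨j, rfl⟩ ⟨a, haU, haA⟩ ⟨b, hbU, hbB⟩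
    by_contra hAB
    have hij : i ≠ j := fun h => hAB (h ▸ rfl)
    have := hSep n m i j hij a haA b hbB
    have h1 : dist a b ≤ dist a z + dist z b := dist_triangle a z b
    rw [mem_ball] at haU hbU
    have hc : dist z b = dist b z := dist_comm z b
    linarith
  · rintro n m W ⟨i, rfl⟩
    exact hOpen n m i
  · intro V hV
    refine ⟨{W | (∃ n m i, W = D n m i) ∧ W ⊆ V}, ?_, ?_⟩
    · rintro W ⟨⟨n, m, i, rfl⟩, -⟩
      exact mem_iUnion.2 ⟨n, mem_iUnion.2 ⟨m, i, rfl⟩⟩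
    · apply Subset.antisymm
      · intro z hz
        rcases isOpen_iff.1 hV z hz with ⟨ε, ε0, hε⟩
        obtain ⟨n, hn⟩ : ∃ n : ℕ, (2⁻¹ : ℝ) ^ n < ε / 2 :=
          exists_pow_lt_of_lt_one (by positivity) (by norm_num)
        rcases hCov n z with ⟨m, i, hzD⟩
        refine ⟨D n m i, ⟨⟨n, m, i, rfl⟩, ?_⟩, hzD⟩
        intro w hw
        apply hε
        have h1 := hSub n m i hw
        have h2 := hSub n m i hzD
        rw [mem_ball] at h1 h2 ⊢
        have h3 : dist w z ≤ dist w i + dist i z := dist_triangle w i z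
        rw [dist_comm i z] at h3
        linarith
      · rintro z ⟨W, ⟨-, hWV⟩, hzW⟩
        exact hWV hzW

lemma functionallyClosed_univ {X : Type*} [TopologicalSpace X] :
    FunctionallyClosed (univ : Set X) :=
  ⟨fun _ => 0, continuous_const, fun _ => ⟨le_refl 0, zero_le_one⟩, by simp⟩

lemma FunctionallyClosed.isClosed {X : Type*} [TopologicalSpace X] {F : Set X}
    (h : FunctionallyClosed F) : IsClosed F := by
  obtain ⟨g, hg, -, rfl⟩ := h
  exact isClosed_singleton.preimage hg

lemma FunctionallyClosed.preimage {X Y : Type*} [TopologicalSpace X] [TopologicalSpace Y]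
    {F : Set Y} (hF : FunctionallyClosed F) {h : X → Y} (hh : Continuous h) :
    FunctionallyClosed (h ⁻¹' F) := by
  obtain ⟨g, hg, hmem, rfl⟩ := hF
  exact ⟨g ∘ h, hg.comp hh, fun x => hmem (h x), rfl⟩

/-- A set of the form `{x | h x ≤ 0}` with `h` continuous is functionally closed. -/
lemma functionallyClosed_of_le_zero {X : Type*} [TopologicalSpace X] {h : X → ℝ}
    (hh : Continuous h) : FunctionallyClosed {x | h x ≤ 0} := by
  refine ⟨fun x => max 0 (min 1 (h x)), ?_, ?_, ?_⟩
  · exact continuous_const.max (continuous_const.min hh)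
  · intro x
    constructor
    · exact le_max_left _ _
    · exact max_le zero_le_one (min_le_left _ _)
  · ext x
    simp only [mem_setOf_eq, mem_preimage, mem_singleton_iff]
    constructor
    · intro hx
      exact max_eq_left (min_le_of_right_le hx)
    · intro hx
      by_contra hc
      push_neg at hc
      have h1 : 0 < min 1 (h x) := lt_min one_pos hc
      rw [max_eq_right h1.le] at hx
      linarith

lemma functionallyClosed_setOf_le_infDist {Y : Type*} [MetricSpace Y] (s : Set Y) (c : ℝ) :
    FunctionallyClosed {y | c ≤ infDist y s} := by
  have h : {y | c ≤ infDist y s} = {y | c - infDist y s ≤ 0} := by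
    ext y; simp [sub_nonpos]
  rw [h]
  exact functionallyClosed_of_le_zero (continuous_const.sub (continuous_infDist_pt s))

lemma functionallyClosed_setOf_infDist_le {Y : Type*} [MetricSpace Y] (s : Set Y) (c : ℝ) :
    FunctionallyClosed {y | infDist y s ≤ c} := by
  have h : {y | infDist y s ≤ c} = {y | infDist y s - c ≤ 0} := by
    ext y; simp [sub_nonpos]
  rw [h]
  exact functionallyClosed_of_le_zero ((continuous_infDist_pt s).sub continuous_const)

lemma FunctionallyClosed.iInter {X : Type*} [TopologicalSpace X] {F : ℕ → Set X}
    (h : ∀ m, FunctionallyClosed (F m)) : FunctionallyClosed (⋂ m, F m) := by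
  choose g hg hmem hF using h
  set c : ℕ → ℝ := fun m => 1 / 2 / 2 ^ m with hc
  have hcpos : ∀ m, 0 < c m := fun m => by positivity
  have hsumc : Summable c := summable_geometric_two' 1
  have htermnn : ∀ m x, 0 ≤ c m * g m x := fun m x =>
    mul_nonneg (hcpos m).le (hmem m x).1
  have htermle : ∀ m x, c m * g m x ≤ c m := fun m x => by
    have := (hmem m x).2
    nlinarith [hcpos m]
  have hsum : ∀ x, Summable fun m => c m * g m x := fun x =>
    Summable.of_nonneg_of_le (fun m => htermnn m x) (fun m => htermle m x) hsumc
  refine ⟨fun x => ∑' m, c m * g m x, ?_, ?_, ?_⟩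
  · refine continuous_tsum (fun m => continuous_const.mul (hg m)) hsumc (fun m x => ?_)
    rw [Real.norm_eq_abs, abs_of_nonneg (htermnn m x)]
    exact htermle m x
  · intro x
    refine ⟨tsum_nonneg (fun m => htermnn m x), ?_⟩
    calc ∑' m, c m * g m x ≤ ∑' m, c m := Summable.tsum_le_tsum (fun m => htermle m x) (hsum x) hsumc
    _ = 1 := tsum_geometric_two' 1
  · ext x
    simp only [mem_iInter, mem_preimage, mem_singleton_iff]
    constructor
    · intro hx
      have h0 : ∀ m, c m * g m x = 0 := fun m => by
        have hgx : g m x = 0 := by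
          have := hx m
          rw [hF m] at this
          exact this
        simp [hgx]
      simp only [h0]
      exact tsum_zero
    · intro hx m
      rw [hF m]
      have h1 : c m * g m x ≤ ∑' k, c k * g k x :=
        Summable.le_tsum (hsum x) m (fun k _ => htermnn k x)
      have h2 := htermnn m x
      have h3 : c m * g m x = 0 := le_antisymm (hx ▸ h1) h2
      have hcm := (hcpos m).ne'
      simpa [mem_preimage, mem_singleton_iff] using (mul_eq_zero.1 h3).resolve_left hcm

end Auxiliary

open Metric Set

/-- Every pointwise limit of continuous maps into a metrizable space admits a base of
functionally closed sets which is a countable union of strongly functionally discrete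
families. -/
theorem baireOne_has_sigma_sfd_zero_base {X Y : Type*} [TopologicalSpace X] [TopologicalSpace Y]
    [TopologicalSpace.MetrizableSpace Y] (f : X → Y) (g : ℕ → X → Y)
    (hg : ∀ n, Continuous (g n)) (hlim : ∀ x, Filter.Tendsto (fun n => g n x) Filter.atTop (nhds (f x))) :
    ∃ 𝓑 : ℕ → Set (Set X), (∀ n, SFDSetFamily (𝓑 n)) ∧
      (∀ n, ∀ B ∈ 𝓑 n, FunctionallyClosed B) ∧
      IsBaseForMapping f (⋃ n, 𝓑 n) := by
  classical
  letI : MetricSpace Y := TopologicalSpace.metrizableSpaceMetric Y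
  obtain ⟨B, hBdisc, hBopen, hBbase⟩ := exists_sigma_discrete_base Y
  set c : ℕ → ℝ := fun k => ((k : ℝ) + 1)⁻¹ with hcdef
  have hcpos : ∀ k, 0 < c k := fun k => by positivity
  set C : Set Y → ℕ → Set Y := fun W k =>
    if W = univ then univ else {y | c k ≤ infDist y Wᶜ} with hCdef
  set D : Set Y → ℕ → Set Y := fun W k =>
    if W = univ then univ else {y | c k / 2 < infDist y Wᶜ} with hDdef
  set A : Set Y → ℕ → ℕ → Set X := fun W k n => ⋂ m, (g (n + m)) ⁻¹' (C W k) with hAdef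
  have hCfc : ∀ W k, FunctionallyClosed (C W k) := by
    intro W k
    by_cases hW : W = univ
    · simp only [hCdef, if_pos hW]; exact functionallyClosed_univ
    · simp only [hCdef, if_neg hW]; exact functionallyClosed_setOf_le_infDist _ _
  have hCD : ∀ W k, C W k ⊆ D W k := by
    intro W k y hy
    by_cases hW : W = univ
    · simp only [hDdef, if_pos hW]; trivial
    · simp only [hCdef, if_neg hW, mem_setOf_eq] at hy
      simp only [hDdef, if_neg hW, mem_setOf_eq]
      have := hcpos k
      linarith
  have hDW : ∀ W k, D W k ⊆ W := by
    intro W k y hy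
    by_cases hW : W = univ
    · rw [hW]; trivial
    · simp only [hDdef, if_neg hW, mem_setOf_eq] at hy
      by_contra hyW
      have h0 : infDist y Wᶜ = 0 := infDist_zero_of_mem hyW
      have := hcpos k
      linarith
  have hCW : ∀ W k, C W k ⊆ W := fun W k => (hCD W k).trans (hDW W k)
  have hAfc : ∀ W k n, FunctionallyClosed (A W k n) := by
    intro W k n
    exact FunctionallyClosed.iInter (fun m => (hCfc W k).preimage (hg (n + m)))
  have hAC : ∀ W k n, A W k n ⊆ (g n) ⁻¹' (C W k) := by
    intro W k n x hx
    have := mem_iInter.1 hx 0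
    simpa using this
  have hUfo : ∀ W k n, FunctionallyOpen ((g n) ⁻¹' (D W k)) := by
    intro W k n
    rw [FunctionallyOpen, ← preimage_compl]
    refine FunctionallyClosed.preimage ?_ (hg n)
    by_cases hW : W = univ
    · simp only [hDdef, if_pos hW, compl_univ]
      exact ⟨fun _ => 1, continuous_const, fun _ => ⟨zero_le_one, le_refl 1⟩, by
        ext y; simp⟩
    · simp only [hDdef, if_neg hW]
      have h : {y | c k / 2 < infDist y Wᶜ}ᶜ = {y | infDist y Wᶜ ≤ c k / 2} := by
        ext y; simp [not_lt]
      rw [h]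
      exact functionallyClosed_setOf_infDist_le _ _
  -- the key representation of preimages of open sets
  have hrep : ∀ W : Set Y, IsOpen W → f ⁻¹' W = ⋃ (k) (n), A W k n := by
    intro W hW
    apply Subset.antisymm
    · intro x hx
      by_cases hWu : W = univ
      · refine mem_iUnion.2 ⟨0, mem_iUnion.2 ⟨0, ?_⟩⟩
        simp only [hAdef, mem_iInter, mem_preimage, hCdef, if_pos hWu]
        intro m; trivial
      · have hWcne : Wᶜ.Nonempty := nonempty_compl.2 hWu
        have hWcc : IsClosed Wᶜ := hW.isClosed_compl
        have hpos : 0 < infDist (f x) Wᶜ :=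
          (hWcc.notMem_iff_infDist_pos hWcne).1 (fun h => h hx)
        obtain ⟨k, hk⟩ : ∃ k : ℕ, 1 / ((k : ℝ) + 1) < infDist (f x) Wᶜ / 2 :=
          exists_nat_one_div_lt (by positivity)
        have hck : c k < infDist (f x) Wᶜ / 2 := by
          rw [hcdef]; simpa [one_div] using hk
        obtain ⟨n, hn⟩ := (Metric.tendsto_atTop.1 (hlim x)) (c k) (hcpos k)
        refine mem_iUnion.2 ⟨k, mem_iUnion.2 ⟨n, ?_⟩⟩
        simp only [hAdef, mem_iInter, mem_preimage, hCdef, if_neg hWu, mem_setOf_eq]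
        intro m
        have hd : dist (g (n + m) x) (f x) < c k := hn (n + m) (Nat.le_add_right n m)
        have htri : infDist (f x) Wᶜ ≤ infDist (g (n + m) x) Wᶜ + dist (f x) (g (n + m) x) :=
          infDist_le_infDist_add_dist
        rw [dist_comm (f x) (g (n + m) x)] at htri
        linarith
    · intro x hx
      rcases mem_iUnion.1 hx with ⟨k, hx⟩
      rcases mem_iUnion.1 hx with ⟨n, hx⟩
      simp only [hAdef, mem_iInter, mem_preimage] at hx
      have hCcl : IsClosed (C W k) := (hCfc W k).isClosed
      have htend : Filter.Tendsto (fun m => g (n + m) x) Filter.atTop (nhds (f x)) :=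
        (hlim x).comp (Filter.tendsto_atTop_mono (fun m => Nat.le_add_left m n)
          Filter.tendsto_id)
      have hfx : f x ∈ C W k :=
        hCcl.mem_of_tendsto htend (Filter.Eventually.of_forall hx)
      exact hCW W k hfx
  -- the families
  set 𝓐 : ℕ → ℕ → ℕ → ℕ → Set (Set X) := fun p q k n =>
    {A' | ∃ W ∈ B p q, A' = A W k n} with h𝓐def
  have h𝓐sfd : ∀ p q k n, SFDSetFamily (𝓐 p q k n) := by
    intro p q k n
    refine ⟨fun A' => if h : ∃ W ∈ B p q, A' = A W k n
      then (g n) ⁻¹' (D h.choose k) else ∅, ?_, ?_⟩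
    · intro A' hA'
      have hA'' : ∃ W ∈ B p q, A' = A W k n := hA'
      simp only [dif_pos hA'']
      obtain ⟨hW₀, hA₀⟩ := hA''.choose_spec
      refine ⟨hUfo _ k n, ?_⟩
      have hsub : A hA''.choose k n ⊆ g n ⁻¹' D hA''.choose k :=
        (hAC _ _ _).trans (preimage_mono (hCD _ _))
      have hcl : IsClosed A' := by rw [hA₀]; exact (hAfc _ k n).isClosed
      rw [hcl.closure_eq]
      exact fun x hx => hsub (hA₀ ▸ hx)
    · intro x
      obtain ⟨O, hOopen, hzO, hOdisc⟩ := hBdisc p q (g n x)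
      refine ⟨g n ⁻¹' O, hOopen.preimage (hg n), hzO, ?_⟩
      rintro A' hA' B' hB' ⟨u, huV, huU⟩ ⟨v, hvV, hvU⟩
      have hA'' : ∃ W ∈ B p q, A' = A W k n := hA'
      have hB'' : ∃ W ∈ B p q, B' = A W k n := hB'
      simp only [dif_pos hA''] at huU
      simp only [dif_pos hB''] at hvU
      obtain ⟨hWA, hAeq⟩ := hA''.choose_spec
      obtain ⟨hWB, hBeq⟩ := hB''.choose_spec
      have h1 : (O ∩ hA''.choose).Nonempty := ⟨g n u, huV, hDW _ k huU⟩
      have h2 : (O ∩ hB''.choose).Nonempty := ⟨g n v, hvV, hDW _ k hvU⟩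
      have heq := hOdisc _ hWA _ hWB h1 h2
      rw [hAeq, hBeq, heq]
  -- assemble, reindexing by a single natural number
  refine ⟨fun t =>
    𝓐 (Denumerable.ofNat (ℕ × ℕ × ℕ × ℕ) t).1 (Denumerable.ofNat (ℕ × ℕ × ℕ × ℕ) t).2.1
      (Denumerable.ofNat (ℕ × ℕ × ℕ × ℕ) t).2.2.1 (Denumerable.ofNat (ℕ × ℕ × ℕ × ℕ) t).2.2.2,
    fun t => h𝓐sfd _ _ _ _, ?_, ?_⟩
  · rintro t B' hB'
    obtain ⟨W, -, rfl⟩ := hB'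
    exact hAfc W _ _
  · intro V hV
    obtain ⟨S, hS, hVS⟩ := hBbase V hV
    refine ⟨{A' | ∃ W ∈ S, ∃ k n, A' = A W k n}, ?_, ?_⟩
    · rintro A' ⟨W, hWS, k, n, rfl⟩
      have hWB := hS hWS
      rcases mem_iUnion.1 hWB with ⟨p, h⟩
      rcases mem_iUnion.1 h with ⟨q, hWpq⟩
      refine mem_iUnion.2 ⟨Encodable.encode (p, q, k, n), ?_⟩
      have hdec : Denumerable.ofNat (ℕ × ℕ × ℕ × ℕ) (Encodable.encode (p, q, k, n))
          = (p, q, k, n) := Denumerable.ofNat_encode _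
      show A W k n ∈ 𝓐 _ _ _ _
      rw [hdec]
      exact ⟨W, hWpq, rfl⟩
    · apply Subset.antisymm
      · intro x hx
        have hfx : f x ∈ ⋃₀ S := hVS ▸ hx
        obtain ⟨W, hWS, hfxW⟩ := hfx
        have hWB := hS hWS
        rcases mem_iUnion.1 hWB with ⟨p, h⟩
        rcases mem_iUnion.1 h with ⟨q, hWpq⟩
        have hWopen : IsOpen W := hBopen p q W hWpq
        have hxA : x ∈ ⋃ (k) (n), A W k n := (hrep W hWopen) ▸ hfxW
        rcases mem_iUnion.1 hxA with ⟨k, hxA⟩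
        rcases mem_iUnion.1 hxA with ⟨n, hxA⟩
        exact ⟨A W k n, ⟨W, hWS, k, n, rfl⟩, hxA⟩
      · rintro x ⟨A', ⟨W, hWS, k, n, rfl⟩, hxA⟩
        have hWB := hS hWS
        rcases mem_iUnion.1 hWB with ⟨p, h⟩
        rcases mem_iUnion.1 h with ⟨q, hWpq⟩
        have hWopen : IsOpen W := hBopen p q W hWpq
        have hxW : x ∈ f ⁻¹' W := by
          rw [hrep W hWopen]
          exact mem_iUnion.2 ⟨k, mem_iUnion.2 ⟨n, hxA⟩⟩
        have hWV : W ⊆ V := fun y hy => hVS ▸ ⟨W, hWS, hy⟩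
        exact hWV hxW
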